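/- Let n ≥ 7 and let t be an integer with 2 ≤ t ≤ ⌊(n−1)/2⌋ − 1, and set M := n − t − 2. Let F be a finite field whose characteristic divides t, let V be a finite-dimensional F-vector space, and let A_1,…,A_M, B_1,…,B_{t+1}, C be subspaces of V. Then inequality (a) holds: H(B_1,…,B_{t+1},A_{t+2},…,A_M) + (t+2)(M−t−1)·H(C) ≤ (M−1)·I(A_1+⋯+A_M ; C) + (t+2)·Σ_{i=t+2}^{M} H(A_i) + ((t+2)(M−t)−1)·( H(C | A_1,…,A_M) + Σ_{i=1}^{M} I(Σ_{j∈[M], j≠i} A_j ; C) ) + Σ_{i=1}^{t+1} ( H(B_i | A_j : j∈[M], j≠i) + H(B_i | A_i, C) + I(A_1+⋯+A_i ; A_{i+1}+⋯+A_{t+1}) + I(A_1+⋯+A_{i−1} ; A_i) ). -/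

import Mathlib

set_option linter.unusedSectionVars false
set_option maxHeartbeats 1000000


open Finset

variable {F V : Type*} [Field F] [AddCommGroup V] [Module F V]

/-- `eH X` is the dimension of the subspace `X`, as an integer
(the "entropy" `H(X)` of the paper). -/
noncomputable def eH (X : Submodule F V) : ℤ := Module.finrank F X


section Helpers
variable [FiniteDimensional F V]

lemma eH_nonneg (X : Submodule F V) : 0 ≤ eH X := Int.natCast_nonneg _

lemma eH_bot : eH (⊥ : Submodule F V) = 0 := by
  simp [eH]

lemma eH_mono {X Y : Submodule F V} (h : X ≤ Y) : eH X ≤ eH Y := by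
  unfold eH; exact_mod_cast Submodule.finrank_mono h

lemma eH_sup_inf (X Y : Submodule F V) : eH (X ⊔ Y) + eH (X ⊓ Y) = eH X + eH Y := by
  have := Submodule.finrank_sup_add_finrank_inf_eq X Y
  unfold eH; exact_mod_cast this

lemma eH_sup_le (X Y : Submodule F V) : eH (X ⊔ Y) ≤ eH X + eH Y := by
  have h := eH_sup_inf X Y
  have := eH_nonneg (X ⊓ Y)
  linarith

/-- submodularity / replacement lemma -/
lemma eH_sup_sub {X Y : Submodule F V} (Z : Submodule F V) (h : X ≤ Y) :
    eH (Y ⊔ Z) + eH X ≤ eH (X ⊔ Z) + eH Y := by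
  have h1 : Y ⊔ (X ⊔ Z) = Y ⊔ Z := by
    rw [← sup_assoc, sup_eq_left.mpr h]
  have h2 := eH_sup_inf Y (X ⊔ Z)
  rw [h1] at h2
  have h3 : X ≤ Y ⊓ (X ⊔ Z) := le_inf h le_sup_left
  have := eH_mono h3
  linarith

lemma sum_le_submodule {s : Finset ℕ} {X : ℕ → Submodule F V} {Y : Submodule F V}
    (h : ∀ i ∈ s, X i ≤ Y) : (∑ i ∈ s, X i) ≤ Y := by
  classical
  induction s using Finset.induction_on with
  | empty => simp
  | insert _ _ hnotmem ih =>
    rename_i a s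
    rw [Finset.sum_insert hnotmem]
    rw [Submodule.add_eq_sup]
    exact sup_le (h a (Finset.mem_insert_self a s))
      (ih fun i hi => h i (Finset.mem_insert_of_mem hi))

lemma le_sum_submodule {s : Finset ℕ} (X : ℕ → Submodule F V) {i : ℕ} (hi : i ∈ s) :
    X i ≤ ∑ j ∈ s, X j :=
  Finset.single_le_sum (f := X) (fun _ _ => zero_le) hi

lemma sum_le_sum_submodule {s : Finset ℕ} {X Y : ℕ → Submodule F V}
    (h : ∀ i ∈ s, X i ≤ Y i) : (∑ i ∈ s, X i) ≤ ∑ i ∈ s, Y i :=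
  Finset.sum_le_sum h

lemma sum_submodule_mono {s u : Finset ℕ} (X : ℕ → Submodule F V) (h : s ⊆ u) :
    (∑ i ∈ s, X i) ≤ ∑ i ∈ u, X i :=
  Finset.sum_le_sum_of_subset h

lemma eH_sum_le (s : Finset ℕ) (X : ℕ → Submodule F V) :
    eH (∑ i ∈ s, X i) ≤ ∑ i ∈ s, eH (X i) := by
  classical
  induction s using Finset.induction_on with
  | empty => simp [eH_bot]
  | insert _ _ hnotmem ih =>
    rename_i a s
    rw [Finset.sum_insert hnotmem, Finset.sum_insert hnotmem, Submodule.add_eq_sup]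
    calc eH (X a ⊔ ∑ i ∈ s, X i) ≤ eH (X a) + eH (∑ i ∈ s, X i) := eH_sup_le _ _
    _ ≤ _ := by linarith

end Helpers

section Helpers2
variable [FiniteDimensional F V]

/-- truncation cost lemma -/
lemma eH_truncate (B Z Y : Submodule F V) :
    eH B ≤ eH (B ⊓ (Z ⊓ Y)) + (eH (B ⊔ Z) - eH Z) + (eH (B ⊔ Y) - eH Y) := by
  have h1 := eH_sup_inf B Z
  have h2 := eH_sup_inf (B ⊓ Z) Y
  have h3 : (B ⊓ Z) ⊓ Y = B ⊓ (Z ⊓ Y) := by rw [inf_assoc]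
  rw [h3] at h2
  have h4 : eH ((B ⊓ Z) ⊔ Y) ≤ eH (B ⊔ Y) := eH_mono (sup_le_sup_right inf_le_left Y)
  linarith

/-- splitting lemma : dim (X ⊓ (Y ⊔ N)) ≤ dim (X ⊓ Y) + dim ((X ⊔ Y) ⊓ N) -/
lemma eH_inf_split (X Y N : Submodule F V) :
    eH (X ⊓ (Y ⊔ N)) ≤ eH (X ⊓ Y) + eH ((X ⊔ Y) ⊓ N) := by
  have hmod : (Y ⊔ N) ⊓ (X ⊔ Y) = Y ⊔ (N ⊓ (X ⊔ Y)) :=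
    sup_inf_assoc_of_le N le_sup_right
  have h2 := eH_sup_inf (X ⊓ (Y ⊔ N)) Y
  have h3 : X ⊓ (Y ⊔ N) ⊓ Y = X ⊓ Y := by
    rw [inf_assoc, inf_eq_right.mpr (le_sup_left : Y ≤ Y ⊔ N)]
  rw [h3] at h2
  have h4 : (X ⊓ (Y ⊔ N)) ⊔ Y ≤ Y ⊔ (N ⊓ (X ⊔ Y)) := by
    rw [← hmod]
    exact sup_le (le_inf inf_le_right (le_trans inf_le_left le_sup_left))
      (le_inf le_sup_left le_sup_right)
  have h5 : eH ((X ⊓ (Y ⊔ N)) ⊔ Y) ≤ eH Y + eH (N ⊓ (X ⊔ Y)) :=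
    le_trans (eH_mono h4) (eH_sup_le _ _)
  have h6 : eH (N ⊓ (X ⊔ Y)) = eH ((X ⊔ Y) ⊓ N) := by rw [inf_comm]
  linarith

/-- finrank of image in quotient -/
lemma finrank_map_mkQ_add (D X : Submodule F V) :
    Module.finrank F (X.map D.mkQ) + Module.finrank F ↥(X ⊓ D) = Module.finrank F X := by
  classical
  have h := LinearMap.finrank_range_add_finrank_ker (D.mkQ.comp X.subtype)
  have hr : LinearMap.range (D.mkQ.comp X.subtype) = X.map D.mkQ := by
    rw [LinearMap.range_comp, Submodule.range_subtype]
  have hk : LinearMap.ker (D.mkQ.comp X.subtype) = (X ⊓ D).comap X.subtype := by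
    rw [LinearMap.ker_comp, Submodule.ker_mkQ]
    ext x
    simp only [Submodule.mem_comap, Submodule.mem_inf]
    exact ⟨fun h => ⟨x.2, h⟩, fun h => h.2⟩
  have he : Module.finrank F ↥((X ⊓ D).comap X.subtype) = Module.finrank F ↥(X ⊓ D) :=
    (Submodule.comapSubtypeEquivOfLe (inf_le_left : X ⊓ D ≤ X)).finrank_eq
  rw [hr, hk, he] at h
  exact h

lemma eH_sup_quot (D X : Submodule F V) (h : D ≤ X) :
    eH X = eH D + (Module.finrank F (X.map D.mkQ) : ℤ) := by
  have := finrank_map_mkQ_add D X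
  rw [inf_eq_right.mpr h] at this
  unfold eH
  push_cast
  omega

/-- relative complement -/
lemma exists_rel_compl {p q : Submodule F V} (h : p ≤ q) :
    ∃ r : Submodule F V, r ≤ q ∧ p ⊓ r = ⊥ ∧ p ⊔ r = q := by
  obtain ⟨r', hr'⟩ := Submodule.exists_isCompl (p.comap q.subtype)
  refine ⟨r'.map q.subtype, Submodule.map_subtype_le q r', ?_, ?_⟩
  · have : p = (p.comap q.subtype).map q.subtype := by
      rw [Submodule.map_comap_subtype, inf_eq_right.mpr h]
    rw [this, ← Submodule.map_inf _ (Submodule.injective_subtype q),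
      hr'.inf_eq_bot, Submodule.map_bot]
  · have : p = (p.comap q.subtype).map q.subtype := by
      rw [Submodule.map_comap_subtype, inf_eq_right.mpr h]
    rw [this, ← Submodule.map_sup, hr'.sup_eq_top, Submodule.map_top,
      Submodule.range_subtype]

/-- counting: sum of dims of subspaces minus dim of their intersection -/
lemma sum_finrank_sub_inf (s : Finset ℕ) (X : ℕ → Submodule F V) :
    (∑ i ∈ s, (Module.finrank F (X i) : ℤ)) ≤
      ((s.card : ℤ) - 1) * Module.finrank F V + Module.finrank F ↥(s.inf X) := by
  classical
  induction s using Finset.induction_on with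
  | empty =>
    simp only [Finset.sum_empty, Finset.card_empty, Finset.inf_empty]
    have : Module.finrank F (⊤ : Submodule F V) = Module.finrank F V := finrank_top F V
    rw [show (∅ : Finset ℕ).inf X = ⊤ from rfl, this]; push_cast; linarith
  | insert _ _ hnotmem ih =>
    rename_i a s
    rw [Finset.sum_insert hnotmem, Finset.inf_insert, Finset.card_insert_of_notMem hnotmem]
    have key : (Module.finrank F (X a) : ℤ) + Module.finrank F ↥(s.inf X) ≤
        Module.finrank F V + Module.finrank F ↥(X a ⊓ s.inf X) := by
      have h1 := eH_sup_inf (X a) (s.inf X)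
      have h2 : eH (X a ⊔ s.inf X) ≤ Module.finrank F V := by
        unfold eH; exact_mod_cast Submodule.finrank_le _
      unfold eH at h1 h2
      push_cast at h1 h2 ⊢
      linarith
    push_cast
    push_cast at ih
    linarith

end Helpers2

section FinsetHelpers

lemma sum_Icc_split {Mo : Type*} [AddCommMonoid Mo] (f : ℕ → Mo) (a b c : ℕ)
    (h1 : a ≤ b + 1) (h2 : b ≤ c) :
    ∑ i ∈ Icc a c, f i = (∑ i ∈ Icc a b, f i) + ∑ i ∈ Icc (b+1) c, f i := by
  rw [← Finset.sum_union]
  · congr 1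
    ext x
    simp only [Finset.mem_union, Finset.mem_Icc]
    omega
  · rw [Finset.disjoint_left]
    intro x hx hx'
    simp only [Finset.mem_Icc] at hx hx'
    omega

lemma sum_Icc_erase_split {Mo : Type*} [AddCommMonoid Mo] (f : ℕ → Mo) (a b c i : ℕ)
    (h1 : a ≤ b + 1) (hi : i ≤ b) (h2 : b ≤ c) :
    ∑ j ∈ (Icc a c).erase i, f j = (∑ j ∈ (Icc a b).erase i, f j) + ∑ j ∈ Icc (b+1) c, f j := by
  rw [← Finset.sum_union]
  · congr 1
    ext x
    simp only [Finset.mem_union, Finset.mem_erase, Finset.mem_Icc]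
    omega
  · rw [Finset.disjoint_left]
    intro x hx hx'
    simp only [Finset.mem_erase, Finset.mem_Icc] at hx hx'
    omega

lemma sum_erase_eq_split {Mo : Type*} [AddCommMonoid Mo] (f : ℕ → Mo) (a b i : ℕ)
    (h0 : 1 ≤ i) (ha : a ≤ i) (hi : i ≤ b) :
    ∑ j ∈ (Icc a b).erase i, f j = (∑ j ∈ Icc a (i-1), f j) + ∑ j ∈ Icc (i+1) b, f j := by
  rw [← Finset.sum_union]
  · congr 1
    ext x
    simp only [Finset.mem_union, Finset.mem_erase, Finset.mem_Icc]
    omega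
  · rw [Finset.disjoint_left]
    intro x hx hx'
    simp only [Finset.mem_Icc] at hx hx'
    omega

lemma sum_Icc_succ_top' {Mo : Type*} [AddCommMonoid Mo] (f : ℕ → Mo) (a b : ℕ) (h : a ≤ b + 1) :
    ∑ i ∈ Icc a (b+1), f i = f (b+1) + ∑ i ∈ Icc a b, f i := by
  rw [← Finset.sum_insert (by simp only [Finset.mem_Icc]; omega)]
  congr 1
  ext x
  simp only [Finset.mem_insert, Finset.mem_Icc]
  omega

lemma tele_sum (g : ℕ → ℤ) (a : ℕ) (ha : 1 ≤ a) :
    ∀ b, a ≤ b + 1 → ∑ i ∈ Icc a b, (g i - g (i-1)) = g b - g (a-1) := by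
  intro b
  induction b with
  | zero =>
    intro h
    have : a = 1 := by omega
    subst this
    simp
  | succ b ih =>
    intro h
    by_cases hab : a ≤ b + 1
    · rw [sum_Icc_succ_top' _ _ _ hab, ih hab]
      simp only [Nat.add_sub_cancel]
      ring
    · have : a = b + 2 := by omega
      subst this
      rw [Finset.Icc_eq_empty (by omega)]
      simp

end FinsetHelpers

section Core
variable {W : Type*} [AddCommGroup W] [Module F W] [FiniteDimensional F W]

lemma core_top (t : ℕ) (ht : 1 ≤ t) (hchar : (t : F) = 0)
    (U B : ℕ → Submodule F W) (C : Submodule F W)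
    (htop : (∑ j ∈ Icc 1 (t+1), U j) = ⊤)
    (hdisj : ∀ k ∈ Icc 1 t, (∑ j ∈ Icc 1 k, U j) ⊓ (∑ j ∈ Icc (k+1) (t+1), U j) = ⊥)
    (hB1 : ∀ i ∈ Icc 1 (t+1), B i ≤ ∑ j ∈ (Icc 1 (t+1)).erase i, U j)
    (hB2 : ∀ i ∈ Icc 1 (t+1), B i ≤ U i ⊔ C) :
    eH (∑ i ∈ Icc 1 (t+1), B i) ≤ (t : ℤ) * eH C := by
  classical
  set P : ℕ → Submodule F W := fun k => ∑ j ∈ Icc 1 k, U j with hP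
  set Q : ℕ → Submodule F W := fun k => ∑ j ∈ Icc (k+1) (t+1), U j with hQ
  have hd : ∀ k, k ≤ t + 1 → P k ⊓ Q k = ⊥ := by
    intro k hk
    rcases Nat.eq_zero_or_pos k with rfl | hk0
    · have : P 0 = ⊥ := by
        simp only [hP]
        rw [Finset.Icc_eq_empty (by omega)]
        simp
      rw [this, bot_inf_eq]
    rcases Nat.lt_or_ge k (t+1) with hkl | hkg
    · exact hdisj k (by simp only [Finset.mem_Icc]; omega)
    · have hk1 : k = t + 1 := by omega
      subst hk1
      have : Q (t+1) = ⊥ := by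
        simp only [hQ]
        rw [Finset.Icc_eq_empty (by omega)]
        simp
      rw [this, inf_bot_eq]
  set Vv : ℕ → Submodule F W := fun i => ∑ j ∈ (Icc 1 (t+1)).erase i, U j with hVv
  have hVeq : ∀ i, 1 ≤ i → i ≤ t + 1 → Vv i = P (i-1) ⊔ Q i := by
    intro i h1 h2
    simp only [hVv, hP, hQ]
    rw [sum_erase_eq_split U 1 (t+1) i h1 h1 h2, Submodule.add_eq_sup]
  have hcompl : ∀ i ∈ Icc 1 (t+1), IsCompl (U i) (Vv i) := by
    intro i hi
    simp only [Finset.mem_Icc] at hi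
    constructor
    · rw [disjoint_iff]
      rw [hVeq i hi.1 hi.2]
      rw [← le_bot_iff]
      intro x hx
      obtain ⟨hxU, hxV⟩ := Submodule.mem_inf.mp hx
      rw [Submodule.mem_sup] at hxV
      obtain ⟨y, hy, z, hz, hyz⟩ := hxV
      have hxPi : x ∈ P i := le_sum_submodule U (by simp only [Finset.mem_Icc]; omega) hxU
      have hyPi : y ∈ P i := sum_submodule_mono U (Finset.Icc_subset_Icc_right (by omega)) hy
      have hz0 : z = 0 := by
        have hzP : z ∈ P i := by
          have : z = x - y := by rw [← hyz]; abel
          rw [this]; exact Submodule.sub_mem _ hxPi hyPi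
        have := hd i (by omega)
        have : z ∈ (⊥ : Submodule F W) := this ▸ Submodule.mem_inf.mpr ⟨hzP, hz⟩
        simpa using this
      have hxy : x = y := by rw [← hyz, hz0, add_zero]
      have hxQ : x ∈ Q (i-1) := by
        apply le_sum_submodule U _ hxU
        simp only [Finset.mem_Icc]
        omega
      have hxP : x ∈ P (i-1) := hxy ▸ hy
      have := hd (i-1) (by omega)
      have : x ∈ (⊥ : Submodule F W) := this ▸ Submodule.mem_inf.mpr ⟨hxP, hxQ⟩
      simpa using this
    · rw [codisjoint_iff]
      rw [← htop]
      rw [← Submodule.add_eq_sup]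
      exact Finset.add_sum_erase _ U (by simp only [Finset.mem_Icc]; omega)
  set p : ℕ → (W →ₗ[F] W) := fun i =>
    if h : i ∈ Icc 1 (t+1) then
      (U i).subtype ∘ₗ (U i).projectionOnto (Vv i) (hcompl i h)
    else 0 with hp
  have hpU : ∀ i ∈ Icc 1 (t+1), ∀ x ∈ U i, p i x = x := by
    intro i hi x hx
    simp only [hp, dif_pos hi, LinearMap.comp_apply, Submodule.coe_subtype]
    have := Submodule.linearProjOfIsCompl_apply_left (hcompl i hi) ⟨x, hx⟩
    rw [this]
  have hpV : ∀ i ∈ Icc 1 (t+1), ∀ x ∈ Vv i, p i x = 0 := by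
    intro i hi x hx
    simp only [hp, dif_pos hi, LinearMap.comp_apply, Submodule.coe_subtype]
    have := Submodule.linearProjOfIsCompl_apply_right (hcompl i hi) ⟨x, hx⟩
    rw [this]
    rfl
  have hsum : ∀ x : W, ∑ i ∈ Icc 1 (t+1), p i x = x := by
    have hker : ∀ j ∈ Icc 1 (t+1), U j ≤
        LinearMap.ker ((∑ i ∈ Icc 1 (t+1), p i) - LinearMap.id) := by
      intro j hj u hu
      rw [LinearMap.mem_ker, LinearMap.sub_apply, LinearMap.id_apply, sub_eq_zero,
        LinearMap.sum_apply]
      rw [Finset.sum_eq_single_of_mem j hj]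
      · exact hpU j hj u hu
      · intro i hi hij
        apply hpV i hi
        exact le_sum_submodule U (Finset.mem_erase.mpr ⟨fun h => hij h.symm, hj⟩) hu
    intro x
    have hx : x ∈ LinearMap.ker ((∑ i ∈ Icc 1 (t+1), p i) - LinearMap.id) := by
      have : (⊤ : Submodule F W) ≤ _ := htop ▸ sum_le_submodule hker
      exact this trivial
    rw [LinearMap.mem_ker, LinearMap.sub_apply, LinearMap.id_apply, sub_eq_zero,
      LinearMap.sum_apply] at hx
    exact hx
  set f : ℕ → (↥C →ₗ[F] W) := fun i => C.subtype - (p i ∘ₗ C.subtype) with hf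
  set Ci : ℕ → Submodule F ↥C := fun i => (B i).comap (f i) with hCi
  have hBC : ∀ i ∈ Icc 1 (t+1), B i = (Ci i).map (f i) := by
    intro i hi
    apply le_antisymm
    · intro b hb
      obtain ⟨α, hα, c₀, hc₀, hsum'⟩ := Submodule.mem_sup.mp (hB2 i hi hb)
      have hpb : p i b = 0 := hpV i hi b (hB1 i hi hb)
      have hpα : p i α = α := hpU i hi α hα
      have hfc : f i ⟨c₀, hc₀⟩ = b := by
        simp only [hf, LinearMap.sub_apply, LinearMap.comp_apply, Submodule.coe_subtype]
        have h1 : p i α + p i c₀ = 0 := by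
          rw [← LinearMap.map_add, hsum', hpb]
        rw [hpα] at h1
        rw [add_comm] at h1
        have h2 : p i c₀ = -α := eq_neg_of_add_eq_zero_left h1
        rw [h2, sub_neg_eq_add, add_comm]
        exact hsum'
      exact Submodule.mem_map.mpr ⟨⟨c₀, hc₀⟩, by
        simp only [hCi, Submodule.mem_comap]; rw [hfc]; exact hb, hfc⟩
    · rintro x ⟨c, hc, rfl⟩
      exact Submodule.mem_comap.mp hc
  have hzero : ∀ c : ↥C, ∑ i ∈ Icc 1 (t+1), f i c = 0 := by
    intro c
    have : ∑ i ∈ Icc 1 (t+1), f i c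
        = ∑ i ∈ Icc 1 (t+1), ((c : W) - p i c) := by
      apply Finset.sum_congr rfl
      intro i _
      simp only [hf, LinearMap.sub_apply, LinearMap.comp_apply, Submodule.coe_subtype]
    rw [this, Finset.sum_sub_distrib, Finset.sum_const, Nat.card_Icc, hsum (c : W)]
    have hcard : t + 1 + 1 - 1 = t + 1 := by omega
    rw [hcard]
    have : (t + 1) • (c : W) - (c : W) = t • (c : W) := by
      rw [add_smul, one_smul]; abel
    rw [this, ← Nat.cast_smul_eq_nsmul F t (c : W), hchar, zero_smul]
  have hdep : ∀ c : ↥C, f (t+1) c = -∑ i ∈ Icc 1 t, f i c := by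
    intro c
    have h0 := hzero c
    rw [sum_Icc_succ_top' (fun i => f i c) 1 t (by omega)] at h0
    exact eq_neg_of_add_eq_zero_left h0
  have hDIle : (Icc 1 (t+1)).inf Ci ≤ Ci (t+1) :=
    Finset.inf_le (by simp only [Finset.mem_Icc]; omega)
  obtain ⟨E, hEle, hEinf, hEsup⟩ := exists_rel_compl hDIle
  set DI := (Icc 1 (t+1)).inf Ci with hDI
  have hspan : (∑ i ∈ Icc 1 (t+1), B i) ≤ (∑ i ∈ Icc 1 t, B i) ⊔ (E.map (f (t+1))) := by
    apply sum_le_submodule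
    intro i hi
    simp only [Finset.mem_Icc] at hi
    rcases Nat.lt_or_ge i (t+1) with hilt | hige
    · exact le_trans (le_sum_submodule B (by simp only [Finset.mem_Icc]; omega))
        le_sup_left
    · have hieq : i = t + 1 := by omega
      subst hieq
      rw [hBC (t+1) (by simp only [Finset.mem_Icc]; omega), ← hEsup, Submodule.map_sup]
      apply sup_le
      · rintro x ⟨c, hcDI, rfl⟩
        apply le_sup_left (α := Submodule F W)
        · rw [hdep c]
          apply Submodule.neg_mem
          apply Submodule.sum_mem
          intro i hi'
          have hi'' : i ∈ Icc 1 (t+1) := by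
            simp only [Finset.mem_Icc] at hi' ⊢; omega
          have hle : DI ≤ Ci i := Finset.inf_le hi''
          have hcCi : c ∈ Ci i := hle hcDI
          exact le_sum_submodule B hi' (Submodule.mem_comap.mp hcCi)
      · exact le_sup_right.trans (le_refl _)
  -- dimension counting
  have hdim1 : eH (∑ i ∈ Icc 1 (t+1), B i) ≤
      (∑ i ∈ Icc 1 t, eH (B i)) + eH (E.map (f (t+1))) := by
    calc eH (∑ i ∈ Icc 1 (t+1), B i) ≤ eH ((∑ i ∈ Icc 1 t, B i) ⊔ (E.map (f (t+1)))) :=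
          eH_mono hspan
    _ ≤ eH (∑ i ∈ Icc 1 t, B i) + eH (E.map (f (t+1))) := eH_sup_le _ _
    _ ≤ _ := by
        have := eH_sum_le (Icc 1 t) B
        linarith [eH_sum_le (Icc 1 t) B]
  have hBle : ∀ i ∈ Icc 1 (t+1), eH (B i) ≤ (Module.finrank F ↥(Ci i) : ℤ) := by
    intro i hi
    rw [hBC i hi]
    unfold eH
    exact_mod_cast Submodule.finrank_map_le (f i) (Ci i)
  have hEdim : eH (E.map (f (t+1))) ≤ (Module.finrank F ↥(Ci (t+1)) : ℤ)
      - Module.finrank F ↥DI := by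
    have h1 : eH (E.map (f (t+1))) ≤ (Module.finrank F ↥E : ℤ) := by
      unfold eH
      exact_mod_cast Submodule.finrank_map_le (f (t+1)) E
    have h2 := eH_sup_inf DI E
    rw [hEsup, hEinf, eH_bot] at h2
    unfold eH at h1 h2 ⊢
    linarith
  have hcount := sum_finrank_sub_inf (Icc 1 (t+1)) Ci
  rw [Nat.card_Icc] at hcount
  have hcard2 : (↑(t + 1 + 1 - 1) : ℤ) - 1 = t := by push_cast; omega
  rw [hcard2] at hcount
  have hCrank : (Module.finrank F ↥C : ℤ) = eH C := rfl
  have hsplitsum : ∑ i ∈ Icc 1 (t+1), (Module.finrank F ↥(Ci i) : ℤ)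
      = (∑ i ∈ Icc 1 t, (Module.finrank F ↥(Ci i) : ℤ)) + Module.finrank F ↥(Ci (t+1)) := by
    rw [sum_Icc_succ_top' (fun i => (Module.finrank F ↥(Ci i) : ℤ)) 1 t (by omega)]
    ring
  have hsum2 : ∑ i ∈ Icc 1 t, eH (B i) ≤ ∑ i ∈ Icc 1 t, (Module.finrank F ↥(Ci i) : ℤ) := by
    apply Finset.sum_le_sum
    intro i hi
    apply hBle
    simp only [Finset.mem_Icc] at hi ⊢
    omega
  rw [hsplitsum] at hcount
  rw [← hCrank]
  linarith

lemma core (t : ℕ) (ht : 1 ≤ t) (hchar : (t : F) = 0)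
    (U B : ℕ → Submodule F W) (C : Submodule F W)
    (hdisj : ∀ k ∈ Icc 1 t, (∑ j ∈ Icc 1 k, U j) ⊓ (∑ j ∈ Icc (k+1) (t+1), U j) = ⊥)
    (hB1 : ∀ i ∈ Icc 1 (t+1), B i ≤ ∑ j ∈ (Icc 1 (t+1)).erase i, U j)
    (hB2 : ∀ i ∈ Icc 1 (t+1), B i ≤ U i ⊔ C) :
    eH (∑ i ∈ Icc 1 (t+1), B i) ≤ (t : ℤ) * eH C := by
  classical
  obtain ⟨R, hR⟩ := Submodule.exists_isCompl (∑ j ∈ Icc 1 (t+1), U j)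
  set T := ∑ j ∈ Icc 1 (t+1), U j with hT
  set U' := Function.update U 1 (U 1 ⊔ R) with hU'
  have hUle : ∀ j, U j ≤ U' j := by
    intro j
    rcases eq_or_ne j 1 with rfl | hj
    · rw [hU', Function.update_self]; exact le_sup_left
    · rw [hU', Function.update_of_ne hj]
  have hsum1 : ∀ s : Finset ℕ, 1 ∈ s → ∑ j ∈ s, U' j = R ⊔ ∑ j ∈ s, U j := by
    intro s h1s
    rw [hU', Finset.sum_update_of_mem h1s]
    rw [← Finset.add_sum_erase s U h1s]
    simp only [Submodule.add_eq_sup]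
    rw [sup_comm (U 1) R, sup_assoc]
    congr 2
    rw [Finset.sdiff_singleton_eq_erase]
  have hsum2 : ∀ s : Finset ℕ, 1 ∉ s → ∑ j ∈ s, U' j = ∑ j ∈ s, U j := by
    intro s h1s
    apply Finset.sum_congr rfl
    intro j hj
    have : j ≠ 1 := fun h => h1s (h ▸ hj)
    rw [hU', Function.update_of_ne this]
  have htop' : ∑ j ∈ Icc 1 (t+1), U' j = ⊤ := by
    rw [hsum1 _ (by simp only [Finset.mem_Icc]; omega), ← hT, sup_comm]
    exact codisjoint_iff.mp hR.codisjoint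
  have hdisj' : ∀ k ∈ Icc 1 t,
      (∑ j ∈ Icc 1 k, U' j) ⊓ (∑ j ∈ Icc (k+1) (t+1), U' j) = ⊥ := by
    intro k hk
    simp only [Finset.mem_Icc] at hk
    rw [hsum1 _ (by simp only [Finset.mem_Icc]; omega),
      hsum2 _ (by simp only [Finset.mem_Icc]; omega)]
    have hPT : (∑ j ∈ Icc 1 k, U j) ≤ T := sum_submodule_mono U (Finset.Icc_subset_Icc_right (by omega))
    have hQT : (∑ j ∈ Icc (k+1) (t+1), U j) ≤ T :=
      sum_submodule_mono U (Finset.Icc_subset_Icc (by omega) (le_refl _))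
    have step1 : (R ⊔ ∑ j ∈ Icc 1 k, U j) ⊓ T = ∑ j ∈ Icc 1 k, U j := by
      rw [sup_comm, sup_inf_assoc_of_le R hPT]
      rw [inf_comm R T, hR.inf_eq_bot, sup_bot_eq]
    calc (R ⊔ ∑ j ∈ Icc 1 k, U j) ⊓ (∑ j ∈ Icc (k+1) (t+1), U j)
        = ((R ⊔ ∑ j ∈ Icc 1 k, U j) ⊓ T) ⊓ (∑ j ∈ Icc (k+1) (t+1), U j) := by
          rw [inf_assoc, inf_eq_right.mpr hQT]
    _ = (∑ j ∈ Icc 1 k, U j) ⊓ (∑ j ∈ Icc (k+1) (t+1), U j) := by rw [step1]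
    _ = ⊥ := hdisj k (by simp only [Finset.mem_Icc]; omega)
  exact core_top t ht hchar U' B C htop' hdisj'
    (fun i hi => le_trans (hB1 i hi) (sum_le_sum_submodule (fun j _ => hUle j)))
    (fun i hi => le_trans (hB2 i hi) (sup_le_sup_right (hUle i) C))

end Core

lemma map_sum_submodule {W₂ : Type*} [AddCommGroup W₂] [Module F W₂] (f : V →ₗ[F] W₂)
    (s : Finset ℕ) (X : ℕ → Submodule F V) :
    (∑ i ∈ s, X i).map f = ∑ i ∈ s, (X i).map f := by
  classical
  induction s using Finset.induction_on with
  | empty => simp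
  | insert _ _ hnotmem ih =>
    rename_i a s
    rw [Finset.sum_insert hnotmem, Finset.sum_insert hnotmem,
      Submodule.add_eq_sup, Submodule.add_eq_sup, Submodule.map_sup, ih]

section Master
variable [FiniteDimensional F V]

lemma master (t M : ℕ) (ht : 1 ≤ t) (htM : t + 1 ≤ M) (hchar : (t : F) = 0)
    (A Bp : ℕ → Submodule F V) (C : Submodule F V)
    (hC : C ≤ ∑ j ∈ Icc 1 M, A j)
    (hB1 : ∀ i ∈ Icc 1 (t+1), Bp i ≤ ∑ j ∈ (Icc 1 M).erase i, A j)
    (hB2 : ∀ i ∈ Icc 1 (t+1), Bp i ≤ A i ⊔ C) :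
    eH ((∑ i ∈ Icc 1 (t+1), Bp i) ⊔ ∑ i ∈ Icc (t+2) M, A i)
      ≤ eH (∑ i ∈ Icc (t+2) M, A i) + (t : ℤ) * eH C
        + ∑ k ∈ Icc 1 t, eH ((∑ j ∈ Icc 1 k, A j) ⊓
            ((∑ j ∈ Icc (k+1) (t+1), A j) ⊔ ∑ i ∈ Icc (t+2) M, A i)) := by
  classical
  set N := ∑ i ∈ Icc (t+2) M, A i with hN
  set P : ℕ → Submodule F V := fun k => ∑ j ∈ Icc 1 k, A j with hP
  set Q : ℕ → Submodule F V := fun k => ∑ j ∈ Icc (k+1) (t+1), A j with hQ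
  set J := ∑ k ∈ Icc 1 t, (P k ⊓ (Q k ⊔ N)) with hJ
  set D := N ⊔ J with hD
  have hstep : ∀ k ∈ Icc 1 t, P k ⊓ (Q k ⊔ D) ≤ D := by
    intro k hk
    simp only [Finset.mem_Icc] at hk
    set G := ∑ l ∈ Icc 1 k, (P l ⊓ (Q l ⊔ N)) with hG
    have hGP : G ≤ P k := by
      apply sum_le_submodule
      intro l hl
      simp only [Finset.mem_Icc] at hl
      exact le_trans inf_le_left
        (sum_submodule_mono A (Finset.Icc_subset_Icc_right (by omega)))
    have hGJ : G ≤ J := sum_submodule_mono _ (Finset.Icc_subset_Icc_right (by omega))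
    have hJle : J ≤ G ⊔ (Q k ⊔ N) := by
      apply sum_le_submodule
      intro l hl
      simp only [Finset.mem_Icc] at hl
      rcases le_or_gt l k with hlk | hlk
      · exact le_trans (le_sum_submodule (fun l => P l ⊓ (Q l ⊔ N))
          (by simp only [Finset.mem_Icc]; omega)) le_sup_left
      · have hQlk : Q l ≤ Q k := by
          rw [hQ]
          exact sum_submodule_mono A (Finset.Icc_subset_Icc (by omega) le_rfl)
        calc P l ⊓ (Q l ⊔ N) ≤ Q l ⊔ N := inf_le_right
        _ ≤ Q k ⊔ N := sup_le_sup_right hQlk N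
        _ ≤ G ⊔ (Q k ⊔ N) := le_sup_right
    have hQD : Q k ⊔ D ≤ (Q k ⊔ N) ⊔ G := by
      rw [hD]
      apply sup_le
      · exact le_trans le_sup_left le_sup_left
      · apply sup_le
        · exact le_trans le_sup_right le_sup_left
        · exact le_trans hJle (by rw [sup_comm])
    have hmod : P k ⊓ ((Q k ⊔ N) ⊔ G) = (P k ⊓ (Q k ⊔ N)) ⊔ G :=
      (inf_sup_assoc_of_le (Q k ⊔ N) hGP).symm
    calc P k ⊓ (Q k ⊔ D) ≤ P k ⊓ ((Q k ⊔ N) ⊔ G) := inf_le_inf_left (P k) hQD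
    _ = (P k ⊓ (Q k ⊔ N)) ⊔ G := hmod
    _ ≤ D := by
        apply sup_le
        · exact le_trans (le_sum_submodule (fun l => P l ⊓ (Q l ⊔ N))
            (by simp only [Finset.mem_Icc]; omega)) le_sup_right
        · exact le_trans hGJ le_sup_right
  set φ := D.mkQ with hφ
  have hkerφ : LinearMap.ker φ = D := Submodule.ker_mkQ D
  have hmapD : D.map φ = ⊥ := by
    rw [← LinearMap.le_ker_iff_map, hkerφ]
  have hmapN : N.map φ = ⊥ := by
    rw [← LinearMap.le_ker_iff_map, hkerφ]; exact le_sup_left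
  set Uh : ℕ → Submodule F (V ⧸ D) := fun i => (A i).map φ with hUh
  have hUdisj : ∀ k ∈ Icc 1 t,
      (∑ j ∈ Icc 1 k, Uh j) ⊓ (∑ j ∈ Icc (k+1) (t+1), Uh j) = ⊥ := by
    intro k hk
    rw [hUh]
    rw [← map_sum_submodule, ← map_sum_submodule]
    rw [← le_bot_iff]
    intro x hx
    obtain ⟨hx1, hx2⟩ := Submodule.mem_inf.mp hx
    obtain ⟨p, hpP, rfl⟩ := Submodule.mem_map.mp hx1
    obtain ⟨q, hqQ, hpq⟩ := Submodule.mem_map.mp hx2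
    have hd : p - q ∈ D := by
      rw [← hkerφ, LinearMap.mem_ker, map_sub, hpq, sub_self]
    have hpmem : p ∈ P k ⊓ (Q k ⊔ D) := by
      refine Submodule.mem_inf.mpr ⟨hpP, ?_⟩
      have : p = q + (p - q) := by abel
      rw [this]
      exact Submodule.add_mem_sup hqQ hd
    have : p ∈ D := hstep k hk hpmem
    simp only [Submodule.mem_bot]
    rw [hφ, Submodule.mkQ_apply, Submodule.Quotient.mk_eq_zero]
    exact this
  have hBh1 : ∀ i ∈ Icc 1 (t+1), (Bp i).map φ ≤ ∑ j ∈ (Icc 1 (t+1)).erase i, Uh j := by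
    intro i hi
    simp only [Finset.mem_Icc] at hi
    have h1 := Submodule.map_mono (f := φ) (hB1 i (by simp only [Finset.mem_Icc]; omega))
    rw [map_sum_submodule] at h1
    rw [sum_Icc_erase_split (fun j => (A j).map φ) 1 (t+1) M i (by omega) hi.2 htM] at h1
    have h2 : (∑ j ∈ Icc (t+2) M, (A j).map φ) = ⊥ := by
      rw [← map_sum_submodule, ← hN, hmapN]
    rw [h2, Submodule.add_eq_sup, sup_bot_eq] at h1
    exact h1
  have hBh2 : ∀ i ∈ Icc 1 (t+1), (Bp i).map φ ≤ Uh i ⊔ C.map φ := by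
    intro i hi
    have := Submodule.map_mono (f := φ) (hB2 i hi)
    rw [Submodule.map_sup] at this
    exact this
  have hcore := core t ht hchar Uh (fun i => (Bp i).map φ) (C.map φ) hUdisj hBh1 hBh2
  have hsumB : (∑ i ∈ Icc 1 (t+1), (Bp i).map φ) = (∑ i ∈ Icc 1 (t+1), Bp i).map φ :=
    (map_sum_submodule φ _ Bp).symm
  rw [hsumB] at hcore
  have h1 : eH ((∑ i ∈ Icc 1 (t+1), Bp i) ⊔ N) ≤ eH ((∑ i ∈ Icc 1 (t+1), Bp i) ⊔ D) :=
    eH_mono (sup_le_sup_left le_sup_left _)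
  have h2 : eH ((∑ i ∈ Icc 1 (t+1), Bp i) ⊔ D)
      = eH D + (Module.finrank F ↥(((∑ i ∈ Icc 1 (t+1), Bp i) ⊔ D).map φ) : ℤ) :=
    eH_sup_quot D _ le_sup_right
  have h3 : ((∑ i ∈ Icc 1 (t+1), Bp i) ⊔ D).map φ = (∑ i ∈ Icc 1 (t+1), Bp i).map φ := by
    rw [Submodule.map_sup, hmapD, sup_bot_eq]
  have h4 : eH D ≤ eH N + ∑ k ∈ Icc 1 t, eH (P k ⊓ (Q k ⊔ N)) := by
    have := eH_sup_le N J
    have := eH_sum_le (Icc 1 t) (fun k => P k ⊓ (Q k ⊔ N))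
    rw [hD]
    linarith
  have h6 : eH (C.map φ) ≤ eH C := by
    unfold eH
    exact_mod_cast Submodule.finrank_map_le φ C
  have h7 : (Module.finrank F ↥((∑ i ∈ Icc 1 (t+1), Bp i).map φ) : ℤ)
      = eH ((∑ i ∈ Icc 1 (t+1), Bp i).map φ) := rfl
  rw [h3, h7] at h2
  have htC : (t : ℤ) * eH (C.map φ) ≤ (t : ℤ) * eH C := by
    apply mul_le_mul_of_nonneg_left h6 (by positivity)
  linarith
end Master

section Transfer
variable [FiniteDimensional F V]

lemma transfer (t M : ℕ) (htM : t + 1 ≤ M) (A : ℕ → Submodule F V) (C : Submodule F V) :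
    ((M : ℤ) - t - 1) * eH ((∑ j ∈ Icc 1 M, A j) ⊓ C)
      ≤ (∑ i ∈ Icc (t+2) M, eH ((∑ j ∈ (Icc 1 M).erase i, A j) ⊓ C))
        + eH (∑ j ∈ Icc 1 M, A j) - eH (∑ j ∈ Icc 1 (t+1), A j) := by
  classical
  set S := ∑ j ∈ Icc 1 M, A j with hS
  set P := ∑ j ∈ Icc 1 (t+1), A j with hP
  set g : ℕ → ℤ := fun i => eH (P ⊔ ∑ j ∈ Icc (t+2) i, A j) with hg
  have key : ∀ i ∈ Icc (t+2) M,
      eH (S ⊓ C) - eH ((∑ j ∈ (Icc 1 M).erase i, A j) ⊓ C) ≤ g i - g (i-1) := by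
    intro i hi
    simp only [Finset.mem_Icc] at hi
    set Si := ∑ j ∈ (Icc 1 M).erase i, A j with hSi
    have hSiS : Si ≤ S := sum_submodule_mono A (Finset.erase_subset i _)
    -- (a)
    have ha : eH (S ⊓ C) - eH (Si ⊓ C) ≤ eH S - eH Si := by
      have h1 := eH_sup_inf (S ⊓ C) Si
      have h2 : (S ⊓ C) ⊓ Si = Si ⊓ C := by
        rw [inf_comm S C, inf_assoc, inf_eq_right.mpr hSiS, inf_comm C Si]
      rw [h2] at h1
      have h3 : eH ((S ⊓ C) ⊔ Si) ≤ eH S := eH_mono (sup_le inf_le_left hSiS)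
      linarith
    -- (b)
    have hSeq : S = Si ⊔ A i := by
      rw [hS, hSi, ← Submodule.add_eq_sup, ← Finset.sum_erase_add _ _
        (by simp only [Finset.mem_Icc]; omega : i ∈ Icc 1 M)]
    set W' := P ⊔ ∑ j ∈ Icc (t+2) (i-1), A j with hW'
    have hW'Si : W' ≤ Si := by
      rw [hW']
      apply sup_le
      · apply sum_le_submodule
        intro j hj
        simp only [Finset.mem_Icc] at hj
        exact le_sum_submodule A (Finset.mem_erase.mpr
          ⟨by omega, by simp only [Finset.mem_Icc]; omega⟩)
      · apply sum_le_submodule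
        intro j hj
        simp only [Finset.mem_Icc] at hj
        exact le_sum_submodule A (Finset.mem_erase.mpr
          ⟨by omega, by simp only [Finset.mem_Icc]; omega⟩)
    have hgi : g i = eH (W' ⊔ A i) := by
      simp only [hg, hW']
      have hi1 : Icc (t+2) i = Icc (t+2) ((i-1)+1) := by
        congr 1
        omega
      rw [hi1, sum_Icc_succ_top' A (t+2) (i-1) (by omega), Submodule.add_eq_sup]
      have hi2 : i - 1 + 1 = i := by omega
      rw [hi2]
      rw [sup_comm (A i) (∑ j ∈ Icc (t+2) (i-1), A j), ← sup_assoc]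
    have hb : eH S - eH Si ≤ g i - g (i-1) := by
      have := eH_sup_sub (A i) hW'Si
      rw [← hgi] at this
      have hg1 : g (i-1) = eH W' := by simp only [hg, hW']
      rw [hSeq]
      linarith
    linarith
  have hsum := Finset.sum_le_sum key
  have htele := tele_sum g (t+2) (by omega) M (by omega)
  rw [htele] at hsum
  rw [Finset.sum_sub_distrib] at hsum
  rw [Finset.sum_const] at hsum
  have hgM : g M = eH S := by
    simp only [hg]
    rw [hS, sum_Icc_split A 1 (t+1) M (by omega) (by omega), Submodule.add_eq_sup, hP]
  have hgt : g (t+2-1) = eH P := by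
    have h21 : t + 2 - 1 = t + 1 := by omega
    simp only [hg, h21]
    rw [Finset.Icc_eq_empty (by omega)]
    simp
  rw [hgM, hgt] at hsum
  have hcard : ((Icc (t+2) M).card : ℤ) = (M : ℤ) - t - 1 := by
    rw [Nat.card_Icc]
    push_cast
    omega
  rw [nsmul_eq_mul, hcard] at hsum
  linarith
end Transfer

section Replace
variable [FiniteDimensional F V]

lemma sum_replace (s : Finset ℕ) (Bf B' : ℕ → Submodule F V)
    (h : ∀ i ∈ s, B' i ≤ Bf i) (X : Submodule F V) :
    eH ((∑ i ∈ s, Bf i) ⊔ X) + ∑ i ∈ s, eH (B' i)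
      ≤ eH ((∑ i ∈ s, B' i) ⊔ X) + ∑ i ∈ s, eH (Bf i) := by
  classical
  induction s using Finset.induction_on generalizing X with
  | empty => simp
  | insert _ _ hnotmem ih =>
    rename_i a s
    rw [Finset.sum_insert hnotmem, Finset.sum_insert hnotmem, Finset.sum_insert hnotmem,
      Finset.sum_insert hnotmem, Submodule.add_eq_sup, Submodule.add_eq_sup]
    have step1 : eH ((Bf a ⊔ ∑ i ∈ s, Bf i) ⊔ X) + eH (B' a)
        ≤ eH ((∑ i ∈ s, Bf i) ⊔ (B' a ⊔ X)) + eH (Bf a) := by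
      have e1 : (Bf a ⊔ ∑ i ∈ s, Bf i) ⊔ X = Bf a ⊔ ((∑ i ∈ s, Bf i) ⊔ X) := by
        rw [sup_assoc]
      have e2 : B' a ⊔ ((∑ i ∈ s, Bf i) ⊔ X) = (∑ i ∈ s, Bf i) ⊔ (B' a ⊔ X) := by
        rw [← sup_assoc, sup_comm (B' a), sup_assoc]
      have := eH_sup_sub ((∑ i ∈ s, Bf i) ⊔ X) (h a (Finset.mem_insert_self a s))
      rw [e1, ← e2]
      linarith
    have step2 := ih (fun i hi => h i (Finset.mem_insert_of_mem hi)) (B' a ⊔ X)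
    have e3 : (B' a ⊔ ∑ i ∈ s, B' i) ⊔ X = (∑ i ∈ s, B' i) ⊔ (B' a ⊔ X) := by
      rw [← sup_assoc, sup_comm (B' a), sup_assoc]
    rw [e3]
    linarith
end Replace


/-- Left-hand side of inequality (a):
`H(B_1,…,B_{t+1},A_{t+2},…,A_M) + (t+2)(M−t−1)·H(C)`. -/
noncomputable def lhsA (t M : ℕ) (A B : ℕ → Submodule F V) (C : Submodule F V) : ℤ :=
  eH ((∑ i ∈ Icc 1 (t+1), B i) + ∑ i ∈ Icc (t+2) M, A i)
    + ((t : ℤ) + 2) * ((M : ℤ) - t - 1) * eH C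

/-- Right-hand side of inequality (a):
`(M−1)·I(A_1+⋯+A_M ; C) + (t+2)·Σ_{i=t+2}^{M} H(A_i)
 + ((t+2)(M−t)−1)·( H(C | A_1,…,A_M) + Σ_{i=1}^{M} I(Σ_{j≠i} A_j ; C) )
 + Σ_{i=1}^{t+1} ( H(B_i | A_j : j≠i) + H(B_i | A_i, C)
      + I(A_1+⋯+A_i ; A_{i+1}+⋯+A_{t+1}) + I(A_1+⋯+A_{i−1} ; A_i) )`. -/
noncomputable def rhsA (t M : ℕ) (A B : ℕ → Submodule F V) (C : Submodule F V) : ℤ :=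
  ((M : ℤ) - 1) * eH ((∑ i ∈ Icc 1 M, A i) ⊓ C)
  + ((t : ℤ) + 2) * ∑ i ∈ Icc (t+2) M, eH (A i)
  + (((t : ℤ) + 2) * ((M : ℤ) - t) - 1) *
      ((eH (C + ∑ i ∈ Icc 1 M, A i) - eH (∑ i ∈ Icc 1 M, A i))
        + ∑ i ∈ Icc 1 M, eH ((∑ j ∈ (Icc 1 M).erase i, A j) ⊓ C))
  + ∑ i ∈ Icc 1 (t+1),
      ((eH (B i + ∑ j ∈ (Icc 1 M).erase i, A j) - eH (∑ j ∈ (Icc 1 M).erase i, A j))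
        + (eH (B i + (A i + C)) - eH (A i + C))
        + eH ((∑ j ∈ Icc 1 i, A j) ⊓ (∑ j ∈ Icc (i+1) (t+1), A j))
        + eH ((∑ j ∈ Icc 1 (i-1), A j) ⊓ A i))

/-- Inequality (a) of the paper. -/
def IneqA (t M : ℕ) (A B : ℕ → Submodule F V) (C : Submodule F V) : Prop :=
  lhsA t M A B C ≤ rhsA t M A B C

/-- Characteristic-dependent linear rank inequality (a): for `n ≥ 7`,
`2 ≤ t ≤ ⌊(n−1)/2⌋ − 1`, `M = n − t − 2`, over a finite field whose
characteristic divides `t`, inequality (a) holds for all subspaces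
`A_1,…,A_M, B_1,…,B_{t+1}, C`. -/
theorem ineqA_of_char_dvd (n t M : ℕ) (hn : 7 ≤ n) (ht2 : 2 ≤ t)
    (ht : t ≤ (n - 1) / 2 - 1) (hM : M = n - t - 2)
    (F V : Type*) [Field F] [Fintype F] [AddCommGroup V] [Module F V]
    [FiniteDimensional F V] (hchar : ringChar F ∣ t)
    (A B : ℕ → Submodule F V) (C : Submodule F V) :
    IneqA t M A B C := by
  classical
  have htM : t + 1 ≤ M := by omega
  have ht1 : 1 ≤ t := by omega
  have hcF : (t : F) = 0 := (ringChar.spec F t).mpr hchar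
  unfold IneqA lhsA rhsA
  simp only [Submodule.add_eq_sup]
  -- abbreviations (as plain terms, matching goal syntax)
  set Tz : ℤ := (t : ℤ) with hTz
  set Mz : ℤ := (M : ℤ) with hMz
  have hMzT : Tz + 1 ≤ Mz := by rw [hTz, hMz]; exact_mod_cast htM
  set B' : ℕ → Submodule F V :=
    fun i => B i ⊓ ((∑ j ∈ (Icc 1 M).erase i, A j) ⊓ (A i ⊔ C)) with hB'
  -- truncation
  have htrunc : ∀ i ∈ Icc 1 (t+1), eH (B i) ≤ eH (B' i)
      + ((eH (B i ⊔ ∑ j ∈ (Icc 1 M).erase i, A j) - eH (∑ j ∈ (Icc 1 M).erase i, A j))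
        + (eH (B i ⊔ (A i ⊔ C)) - eH (A i ⊔ C))) := by
    intro i _
    have := eH_truncate (B i) (∑ j ∈ (Icc 1 M).erase i, A j) (A i ⊔ C)
    simp only [hB']
    linarith
  have htruncS := Finset.sum_le_sum htrunc
  rw [Finset.sum_add_distrib, Finset.sum_add_distrib] at htruncS
  have hrep := sum_replace (Icc 1 (t+1)) B B'
    (fun i _ => inf_le_left) (∑ i ∈ Icc (t+2) M, A i)
  -- master hypotheses
  have hSiS : ∀ i, (∑ j ∈ (Icc 1 M).erase i, A j) ≤ ∑ j ∈ Icc 1 M, A j :=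
    fun i => sum_submodule_mono A (Finset.erase_subset i _)
  have hB'1 : ∀ i ∈ Icc 1 (t+1), B' i ≤ ∑ j ∈ (Icc 1 M).erase i, A j := by
    intro i _
    simp only [hB']
    exact le_trans inf_le_right inf_le_left
  have hB'2 : ∀ i ∈ Icc 1 (t+1), B' i ≤ A i ⊔ (C ⊓ ∑ j ∈ Icc 1 M, A j) := by
    intro i hi
    simp only [Finset.mem_Icc] at hi
    have hAiS : A i ≤ ∑ j ∈ Icc 1 M, A j :=
      le_sum_submodule A (by simp only [Finset.mem_Icc]; omega)
    have hmod : (A i ⊔ C) ⊓ (∑ j ∈ Icc 1 M, A j) = A i ⊔ (C ⊓ ∑ j ∈ Icc 1 M, A j) :=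
      sup_inf_assoc_of_le C hAiS
    rw [← hmod]
    simp only [hB']
    exact le_inf (le_trans inf_le_right inf_le_right)
      (le_trans inf_le_right (le_trans inf_le_left (hSiS i)))
  have hmas := master t M ht1 htM hcF A B' (C ⊓ ∑ j ∈ Icc 1 M, A j) inf_le_right hB'1 hB'2
  -- split the master correction terms
  have hsplit : ∀ k ∈ Icc 1 t,
      eH ((∑ j ∈ Icc 1 k, A j) ⊓ ((∑ j ∈ Icc (k+1) (t+1), A j) ⊔ ∑ i ∈ Icc (t+2) M, A i))
        ≤ eH ((∑ j ∈ Icc 1 k, A j) ⊓ (∑ j ∈ Icc (k+1) (t+1), A j))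
          + eH ((∑ j ∈ Icc 1 (t+1), A j) ⊓ ∑ i ∈ Icc (t+2) M, A i) := by
    intro k hk
    simp only [Finset.mem_Icc] at hk
    have h1 := eH_inf_split (∑ j ∈ Icc 1 k, A j) (∑ j ∈ Icc (k+1) (t+1), A j)
      (∑ i ∈ Icc (t+2) M, A i)
    have h2 : (∑ j ∈ Icc 1 k, A j) ⊔ (∑ j ∈ Icc (k+1) (t+1), A j)
        = ∑ j ∈ Icc 1 (t+1), A j := by
      rw [sum_Icc_split A 1 k (t+1) (by omega) (by omega), Submodule.add_eq_sup]
    rw [h2] at h1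
    exact h1
  have hsplitS := Finset.sum_le_sum hsplit
  rw [Finset.sum_add_distrib, Finset.sum_const, Nat.card_Icc] at hsplitS
  have hcardt : t + 1 - 1 = t := by omega
  rw [hcardt, nsmul_eq_mul] at hsplitS
  -- transfer
  have htr := transfer t M htM A C
  -- basic identities
  have hCsp := eH_sup_inf C (∑ j ∈ Icc 1 M, A j)
  have hflip : eH (C ⊓ ∑ j ∈ Icc 1 M, A j) = eH ((∑ j ∈ Icc 1 M, A j) ⊓ C) := by
    rw [inf_comm]
  have hPsup : (∑ j ∈ Icc 1 (t+1), A j) ⊔ (∑ i ∈ Icc (t+2) M, A i) = ∑ j ∈ Icc 1 M, A j := by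
    rw [← Submodule.add_eq_sup, ← sum_Icc_split A 1 (t+1) M (by omega) (by omega)]
  have hPN := eH_sup_inf (∑ j ∈ Icc 1 (t+1), A j) (∑ i ∈ Icc (t+2) M, A i)
  rw [hPsup] at hPN
  have hpn_nonneg := eH_nonneg ((∑ j ∈ Icc 1 (t+1), A j) ⊓ ∑ i ∈ Icc (t+2) M, A i)
  have hNA : eH (∑ i ∈ Icc (t+2) M, A i) ≤ ∑ i ∈ Icc (t+2) M, eH (A i) :=
    eH_sum_le _ _
  -- scaled facts
  have hgam2_nonneg : (0:ℤ) ≤ ∑ i ∈ Icc (t+2) M, eH ((∑ j ∈ (Icc 1 M).erase i, A j) ⊓ C) :=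
    Finset.sum_nonneg (fun i _ => eH_nonneg _)
  have hgamall_nonneg : (0:ℤ) ≤ ∑ i ∈ Icc 1 M, eH ((∑ j ∈ (Icc 1 M).erase i, A j) ⊓ C) :=
    Finset.sum_nonneg (fun i _ => eH_nonneg _)
  have hγ : (∑ i ∈ Icc (t+2) M, eH ((∑ j ∈ (Icc 1 M).erase i, A j) ⊓ C))
      ≤ ∑ i ∈ Icc 1 M, eH ((∑ j ∈ (Icc 1 M).erase i, A j) ⊓ C) :=
    Finset.sum_le_sum_of_subset_of_nonneg
      (Finset.Icc_subset_Icc (by omega) le_rfl) (fun i hi _ => eH_nonneg _)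
  have hT0 : (0:ℤ) ≤ Tz + 1 := by rw [hTz]; positivity
  have htrm := mul_le_mul_of_nonneg_left htr hT0
  have hγm := mul_le_mul_of_nonneg_left hγ hT0
  have hK1 : Tz + 1 ≤ (Tz + 2) * (Mz - Tz) - 1 := by
    have h1 : (1:ℤ) ≤ Mz - Tz := by linarith
    have h2 : (Tz + 2) * 1 ≤ (Tz + 2) * (Mz - Tz) :=
      mul_le_mul_of_nonneg_left h1 (by linarith)
    linarith
  have hKg := mul_le_mul_of_nonneg_right hK1 hgamall_nonneg
  have hcc_nonneg : (0:ℤ) ≤ eH (C ⊔ ∑ j ∈ Icc 1 M, A j) - eH (∑ j ∈ Icc 1 M, A j) := by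
    have := eH_mono (le_sup_right : (∑ j ∈ Icc 1 M, A j) ≤ C ⊔ ∑ j ∈ Icc 1 M, A j)
    linarith
  have hK2 : (Tz + 2) * (Mz - Tz - 1) ≤ (Tz + 2) * (Mz - Tz) - 1 := by
    have : (Tz + 2) * (Mz - Tz - 1) = (Tz + 2) * (Mz - Tz) - (Tz + 2) := by ring
    linarith
  have hKcc := mul_le_mul_of_nonneg_right hK2 hcc_nonneg
  have hT20 : (0:ℤ) ≤ Tz + 2 := by linarith
  have hNAm := mul_le_mul_of_nonneg_left hNA hT20
  have hPQ : (∑ k ∈ Icc 1 t, eH ((∑ j ∈ Icc 1 k, A j) ⊓ (∑ j ∈ Icc (k+1) (t+1), A j)))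
      ≤ ∑ k ∈ Icc 1 (t+1), eH ((∑ j ∈ Icc 1 k, A j) ⊓ (∑ j ∈ Icc (k+1) (t+1), A j)) :=
    Finset.sum_le_sum_of_subset_of_nonneg
      (Finset.Icc_subset_Icc le_rfl (by omega)) (fun i hi _ => eH_nonneg _)
  have hcorr2 : (0:ℤ) ≤ ∑ i ∈ Icc 1 (t+1), eH ((∑ j ∈ Icc 1 (i-1), A j) ⊓ A i) :=
    Finset.sum_nonneg (fun i _ => eH_nonneg _)
  -- goal's last big sum: split it
  rw [Finset.sum_add_distrib, Finset.sum_add_distrib, Finset.sum_add_distrib]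
  -- multiplied bridges
  have hmflip : Tz * eH (C ⊓ ∑ j ∈ Icc 1 M, A j)
      = Tz * eH ((∑ j ∈ Icc 1 M, A j) ⊓ C) := by rw [hflip]
  have hCm : (Tz + 2) * (Mz - Tz - 1) * eH C
      = (Tz + 2) * (Mz - Tz - 1) * (eH (C ⊔ ∑ j ∈ Icc 1 M, A j) - eH (∑ j ∈ Icc 1 M, A j))
        + (Tz + 2) * (Mz - Tz - 1) * eH ((∑ j ∈ Icc 1 M, A j) ⊓ C) := by
    have hce : eH C = (eH (C ⊔ ∑ j ∈ Icc 1 M, A j) - eH (∑ j ∈ Icc 1 M, A j))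
        + eH ((∑ j ∈ Icc 1 M, A j) ⊓ C) := by
      rw [← hflip]; linarith
    rw [hce]; ring
  have hPNm : Tz * eH ((∑ j ∈ Icc 1 (t+1), A j) ⊓ ∑ i ∈ Icc (t+2) M, A i)
      = Tz * (eH (∑ j ∈ Icc 1 (t+1), A j) + eH (∑ i ∈ Icc (t+2) M, A i)
        - eH (∑ j ∈ Icc 1 M, A j)) := by
    have : eH ((∑ j ∈ Icc 1 (t+1), A j) ⊓ ∑ i ∈ Icc (t+2) M, A i)
        = eH (∑ j ∈ Icc 1 (t+1), A j) + eH (∑ i ∈ Icc (t+2) M, A i)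
          - eH (∑ j ∈ Icc 1 M, A j) := by linarith
    rw [this]
  have hring : Tz * eH ((∑ j ∈ Icc 1 M, A j) ⊓ C)
      + (Tz + 2) * (Mz - Tz - 1) * eH ((∑ j ∈ Icc 1 M, A j) ⊓ C)
      = (Mz - 1) * eH ((∑ j ∈ Icc 1 M, A j) ⊓ C)
        + (Tz + 1) * ((Mz - Tz - 1) * eH ((∑ j ∈ Icc 1 M, A j) ⊓ C)) := by ring
  linarith [htruncS, hrep, hmas, hsplitS, htrm, hγm, hKg, hKcc, hNAm, hPQ, hcorr2,
    hmflip, hCm, hPNm, hring, hpn_nonneg, hPN]
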